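/- Let Q be a monic polynomial with integer coefficients of degree d ≥ 1, and for k ≥ 1 let P_k(x) = x^k Q(x) + Q*(x) be the associated Salem–Boyd sequence. If Q has at least one complex root of modulus strictly greater than 1 (i.e. the house |Q| > 1), then the houses of P_k converge to the house of Q: lim_{k→∞} |P_k| = |Q|. -/

import Mathlib

open Polynomial

noncomputable section

/-- The reciprocal polynomial `Q*(x) = x^d · Q(1/x)` of a polynomial of degree `d`. -/
def reciprocal (Q : Polynomial ℤ) : Polynomial ℤ :=
  Polynomial.reflect Q.natDegree Q

/-- The Salem–Boyd sequence `P_k(x) = x^k Q(x) + Q*(x)`. -/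
def salemBoyd (Q : Polynomial ℤ) (k : ℕ) : Polynomial ℤ :=
  Polynomial.X ^ k * Q + reciprocal Q

/-- The house of an integer polynomial: the maximum of `|z|` over its complex
roots `z`. -/
def house (p : Polynomial ℤ) : ℝ :=
  sSup ((fun z : ℂ => ‖z‖) '' {z : ℂ | (p.map (Int.castRingHom ℂ)).IsRoot z})

private lemma sb_prod_ge (c : ℝ) (hc : 0 ≤ c) :
    ∀ (s : Multiset ℝ), (∀ x ∈ s, c ≤ x) → c ^ Multiset.card s ≤ s.prod := by
  intro s
  induction s using Multiset.induction with
  | empty => simp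
  | cons a s ih =>
    intro h
    have ha := h a (Multiset.mem_cons_self a s)
    have hs := ih (fun x hx => h x (Multiset.mem_cons_of_mem hx))
    simp only [Multiset.card_cons, Multiset.prod_cons, pow_succ']
    exact mul_le_mul ha hs (pow_nonneg hc _) (le_trans hc ha)

private lemma sb_eval_abs_le (p : Polynomial ℂ) (z : ℂ) (hz : 1 ≤ ‖z‖) :
    ‖p.eval z‖ ≤
      (∑ i ∈ Finset.range (p.natDegree + 1), ‖p.coeff i‖) *
        ‖z‖ ^ p.natDegree := by
  rw [Polynomial.eval_eq_sum_range]
  calc ‖∑ i ∈ Finset.range (p.natDegree + 1), p.coeff i * z ^ i‖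
      ≤ ∑ i ∈ Finset.range (p.natDegree + 1), ‖p.coeff i * z ^ i‖ :=
        norm_sum_le _ _
    _ ≤ ∑ i ∈ Finset.range (p.natDegree + 1),
          ‖p.coeff i‖ * ‖z‖ ^ p.natDegree := by
        refine Finset.sum_le_sum fun i hi => ?_
        rw [norm_mul, norm_pow]
        exact mul_le_mul_of_nonneg_left
          (pow_le_pow_right₀ hz (Nat.lt_succ_iff.mp (Finset.mem_range.mp hi)))
          (norm_nonneg _)
    _ = _ := by rw [Finset.sum_mul]

theorem stmt_14 (Q : Polynomial ℤ) (hQ : Q.Monic) (hd : 1 ≤ Q.natDegree)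
    (hroot : ∃ z : ℂ, (Q.map (Int.castRingHom ℂ)).IsRoot z ∧ 1 < ‖z‖) :
    Filter.Tendsto (fun k : ℕ => house (salemBoyd Q k)) Filter.atTop
      (nhds (house Q)) := by
  classical
  set d := Q.natDegree with hd_def
  set Qc : Polynomial ℂ := Q.map (Int.castRingHom ℂ) with hQc_def
  set Rc : Polynomial ℂ := (reciprocal Q).map (Int.castRingHom ℂ) with hRc_def
  have hQcm : Qc.Monic := hQ.map _
  have hQc0 : Qc ≠ 0 := hQcm.ne_zero
  have hQcdeg : Qc.natDegree = d := hQ.natDegree_map _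
  have hsplits : Splits Qc := IsAlgClosed.splits Qc
  have hcard : Qc.roots.card = d := by
    rw [← hQcdeg]; exact (Polynomial.splits_iff_card_roots.mp hsplits)
  -- the set of roots of Qc
  have hSfin : Set.Finite {z : ℂ | Qc.IsRoot z} := Polynomial.finite_setOf_isRoot hQc0
  have hSne : Set.Nonempty {z : ℂ | Qc.IsRoot z} := by
    obtain ⟨z, hz⟩ := Complex.exists_root (f := Qc)
      (by rw [Polynomial.degree_eq_natDegree hQc0, hQcdeg]; exact_mod_cast hd)
    exact ⟨z, hz⟩
  set M : ℝ := house Q with hM_def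
  have hhouseQ : M = sSup ((fun z : ℂ => ‖z‖) '' {z : ℂ | Qc.IsRoot z}) := rfl
  have hroot_le : ∀ z : ℂ, Qc.IsRoot z → ‖z‖ ≤ M := by
    intro z hz
    rw [hhouseQ]
    exact le_csSup (hSfin.image _).bddAbove ⟨z, hz, rfl⟩
  obtain ⟨α, hαroot, hαabs⟩ : ∃ α : ℂ, Qc.IsRoot α ∧ ‖α‖ = M := by
    have := (hSne.image (fun z : ℂ => ‖z‖)).csSup_mem (hSfin.image _)
    rw [← hhouseQ] at this
    obtain ⟨α, hα, h⟩ := this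
    exact ⟨α, hα, h⟩
  have hM1 : 1 < M := by
    obtain ⟨z, hz, hz1⟩ := hroot
    exact lt_of_lt_of_le hz1 (hroot_le z hz)
  -- map of the Salem-Boyd polynomials
  have hmap : ∀ k : ℕ, (salemBoyd Q k).map (Int.castRingHom ℂ) = X ^ k * Qc + Rc := by
    intro k
    simp [salemBoyd, Polynomial.map_add, Polynomial.map_mul, Polynomial.map_pow, hQc_def, hRc_def]
  have hRdeg : Rc.natDegree ≤ d := by
    refine le_trans Polynomial.natDegree_map_le ?_
    rw [reciprocal]
    refine Polynomial.natDegree_le_iff_coeff_eq_zero.mpr fun N hN => ?_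
    rw [Polynomial.coeff_reflect, Polynomial.revAt_eq_self_of_lt hN]
    exact Polynomial.coeff_eq_zero_of_natDegree_lt hN
  have hPcoeff : ∀ k : ℕ, 1 ≤ k → (X ^ k * Qc + Rc).coeff (k + d) = 1 := by
    intro k hk
    rw [Polynomial.coeff_add, mul_comm, Polynomial.coeff_mul_X_pow']
    have h1 : Rc.coeff (k + d) = 0 :=
      Polynomial.coeff_eq_zero_of_natDegree_lt (lt_of_le_of_lt hRdeg (by omega))
    simp only [h1, add_zero]
    rw [if_pos (by omega)]
    have : k + d - k = d := by omega
    rw [this]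
    exact hQcdeg ▸ hQcm.coeff_natDegree
  have hPk0 : ∀ k : ℕ, 1 ≤ k → (X ^ k * Qc + Rc) ≠ 0 := by
    intro k hk h
    have := hPcoeff k hk
    rw [h] at this
    simp at this
  have hPkdeg : ∀ k : ℕ, 1 ≤ k → k + d ≤ (X ^ k * Qc + Rc).natDegree := by
    intro k hk
    exact Polynomial.le_natDegree_of_ne_zero (by rw [hPcoeff k hk]; exact one_ne_zero)
  have hPkroot : ∀ k : ℕ, 1 ≤ k → ∃ z : ℂ, (X ^ k * Qc + Rc).IsRoot z := by
    intro k hk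
    refine Complex.exists_root ?_
    rw [Polynomial.degree_eq_natDegree (hPk0 k hk)]
    exact_mod_cast lt_of_lt_of_le (by omega : 0 < k + d) (hPkdeg k hk)
  have hhouse_eq : ∀ k : ℕ, house (salemBoyd Q k) =
      sSup ((fun z : ℂ => ‖z‖) '' {z : ℂ | (X ^ k * Qc + Rc).IsRoot z}) := by
    intro k; rw [house, hmap]
  have hhouse_ge : ∀ k : ℕ, 1 ≤ k → ∀ z : ℂ, (X ^ k * Qc + Rc).IsRoot z →
      ‖z‖ ≤ house (salemBoyd Q k) := by
    intro k hk z hz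
    rw [hhouse_eq]
    exact le_csSup ((Polynomial.finite_setOf_isRoot (hPk0 k hk)).image _).bddAbove ⟨z, hz, rfl⟩
  have hhouse_le : ∀ k : ℕ, 1 ≤ k → ∀ B : ℝ,
      (∀ z : ℂ, (X ^ k * Qc + Rc).IsRoot z → ‖z‖ ≤ B) →
      house (salemBoyd Q k) ≤ B := by
    intro k hk B hB
    rw [hhouse_eq]
    obtain ⟨z, hz⟩ := hPkroot k hk
    exact csSup_le ⟨‖z‖, z, hz, rfl⟩ (by rintro y ⟨w, hw, rfl⟩; exact hB w hw)
  -- evaluation identity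
  have heval : ∀ (k : ℕ) (z : ℂ), (X ^ k * Qc + Rc).eval z = z ^ k * Qc.eval z + Rc.eval z := by
    intro k z; simp
  -- lower bound on |Qc z| for large |z|
  have hQc_lb : ∀ (ε : ℝ), 0 < ε → ∀ z : ℂ, M + ε ≤ ‖z‖ →
      ε ^ d ≤ ‖Qc.eval z‖ := by
    intro ε hε z hz
    have hfac : Qc = (Qc.roots.map fun a => X - C a).prod :=
      hsplits.eq_prod_roots_of_monic hQcm
    have hnm : ∀ s : Multiset ℂ, ‖s.prod‖ = (s.map (fun w : ℂ => ‖w‖)).prod :=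
      fun s => map_multiset_prod (normHom (α := ℂ)) s
    rw [hfac, Polynomial.eval_multiset_prod, hnm, Multiset.map_map,
      Multiset.map_map]
    have hcard2 : Multiset.card (Multiset.map
        (((fun w : ℂ => ‖w‖) ∘ eval z) ∘ fun a => X - C a) Qc.roots) = d := by
      rw [Multiset.card_map, hcard]
    rw [← hcard2]
    refine sb_prod_ge ε hε.le _ ?_
    intro x hx
    rw [Multiset.mem_map] at hx
    obtain ⟨a, ha, rfl⟩ := hx
    have haM : ‖a‖ ≤ M := hroot_le a ((Polynomial.mem_roots hQc0).mp ha)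
    simp only [Function.comp_apply, Polynomial.eval_sub, Polynomial.eval_X, Polynomial.eval_C]
    have hsub : ‖z‖ - ‖a‖ ≤ ‖z - a‖ := by
      exact norm_sub_norm_le z a
    linarith
  have hQα : Qc.eval α = 0 := hαroot
  -- upper bound coefficient constant
  set C : ℝ := ∑ i ∈ Finset.range (Rc.natDegree + 1), ‖Rc.coeff i‖ with hC_def
  have hC0 : 0 ≤ C := Finset.sum_nonneg fun i _ => norm_nonneg _
  have hub : ∀ ε : ℝ, 0 < ε → ∀ᶠ k in Filter.atTop, house (salemBoyd Q k) ≤ M + ε := by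
    intro ε hε
    have h1 : (1:ℝ) < M + ε := by linarith
    have htend : Filter.Tendsto (fun j : ℕ => (M + ε) ^ j * ε ^ d) Filter.atTop Filter.atTop :=
      (tendsto_pow_atTop_atTop_of_one_lt h1).atTop_mul_const (pow_pos hε d)
    obtain ⟨N0, hN0⟩ := Filter.eventually_atTop.mp (htend.eventually_gt_atTop C)
    rw [Filter.eventually_atTop]
    refine ⟨N0 + d + 1, fun k hk => ?_⟩
    have hk1 : 1 ≤ k := by omega
    refine hhouse_le k hk1 (M + ε) fun z hz => ?_
    by_contra hgt
    push_neg at hgt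
    have hz1 : (1:ℝ) ≤ ‖z‖ := by linarith
    have hzM : M + ε ≤ ‖z‖ := hgt.le
    have h0 : z ^ k * Qc.eval z + Rc.eval z = 0 := by rw [← heval k z]; exact hz
    have habs : ‖z‖ ^ k * ‖Qc.eval z‖ = ‖Rc.eval z‖ := by
      have hA : z ^ k * Qc.eval z = -(Rc.eval z) := by linear_combination h0
      calc ‖z‖ ^ k * ‖Qc.eval z‖
          = ‖z ^ k * Qc.eval z‖ := by rw [norm_mul, norm_pow]
        _ = ‖-(Rc.eval z)‖ := by rw [hA]
        _ = ‖Rc.eval z‖ := by simp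
    have hRle : ‖Rc.eval z‖ ≤ C * ‖z‖ ^ d := by
      calc ‖Rc.eval z‖ ≤ C * ‖z‖ ^ Rc.natDegree := sb_eval_abs_le Rc z hz1
        _ ≤ C * ‖z‖ ^ d :=
            mul_le_mul_of_nonneg_left (pow_le_pow_right₀ hz1 hRdeg) hC0
    have hQge : ε ^ d ≤ ‖Qc.eval z‖ := hQc_lb ε hε z hzM
    have hzpos : (0:ℝ) < ‖z‖ := by linarith
    have h2 : ‖z‖ ^ k * ε ^ d ≤ C * ‖z‖ ^ d := by
      calc ‖z‖ ^ k * ε ^ d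
          ≤ ‖z‖ ^ k * ‖Qc.eval z‖ :=
            mul_le_mul_of_nonneg_left hQge (pow_nonneg hzpos.le k)
        _ = ‖Rc.eval z‖ := habs
        _ ≤ C * ‖z‖ ^ d := hRle
    have h3 : ‖z‖ ^ k = ‖z‖ ^ (k - d) * ‖z‖ ^ d := by
      rw [← pow_add]; congr 1; omega
    have h2' : (‖z‖ ^ (k - d) * ε ^ d) * ‖z‖ ^ d
        ≤ C * ‖z‖ ^ d := by
      calc (‖z‖ ^ (k - d) * ε ^ d) * ‖z‖ ^ d
          = ‖z‖ ^ k * ε ^ d := by rw [h3]; ring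
        _ ≤ C * ‖z‖ ^ d := h2
    have hkey : ‖z‖ ^ (k - d) * ε ^ d ≤ C :=
      le_of_mul_le_mul_right h2' (pow_pos hzpos d)
    have h5 : (M + ε) ^ (k - d) * ε ^ d ≤ ‖z‖ ^ (k - d) * ε ^ d :=
      mul_le_mul_of_nonneg_right (pow_le_pow_left₀ (by linarith) hzM _) (pow_nonneg hε.le d)
    have h6 := hN0 (k - d) (by omega)
    linarith
  have hlb : ∀ ε : ℝ, 0 < ε → ∀ᶠ k in Filter.atTop, M - ε ≤ house (salemBoyd Q k) := by
    intro ε hε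
    by_cases hc : Rc.eval α = 0
    · rw [Filter.eventually_atTop]
      refine ⟨1, fun k hk => ?_⟩
      have hα : (X ^ k * Qc + Rc).IsRoot α := by
        rw [Polynomial.IsRoot.def, heval k α, hQα, hc]; ring
      calc M - ε ≤ M := by linarith
        _ = ‖α‖ := hαabs.symm
        _ ≤ _ := hhouse_ge k hk α hα
    · have hcpos : 0 < ‖Rc.eval α‖ := norm_pos_iff.mpr hc
      set δ0 : ℝ := min ε ((M - 1) / 2) with hδ0
      have hδ0pos : 0 < δ0 := lt_min hε (by linarith)
      obtain ⟨r, hrIoo, hrD⟩ := (Set.Ioo_infinite hδ0pos).exists_notMem_finset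
        (Qc.roots.toFinset.image fun w => dist α w)
      obtain ⟨hr0, hrδ⟩ := hrIoo
      have hrε : r < ε := lt_of_lt_of_le hrδ (min_le_left _ _)
      have hrM : (M + 1) / 2 ≤ M - r := by
        have := lt_of_lt_of_le hrδ (min_le_right _ _); linarith
      have h1half : (1:ℝ) < (M + 1) / 2 := by linarith
      have hsph : ∀ w ∈ Metric.sphere α r, Qc.eval w ≠ 0 := by
        intro w hw hwr
        apply hrD
        refine Finset.mem_image.mpr ⟨w, ?_, ?_⟩
        · rw [Multiset.mem_toFinset]; exact (Polynomial.mem_roots hQc0).mpr hwr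
        · rw [dist_comm]; exact Metric.mem_sphere.mp hw
      have hsphne : (Metric.sphere α r).Nonempty := NormedSpace.sphere_nonempty.mpr hr0.le
      have hcomp : IsCompact (Metric.sphere α r) := isCompact_sphere α r
      obtain ⟨w₀, hw₀mem, hw₀min⟩ := hcomp.exists_isMinOn hsphne
        ((continuous_norm.comp Qc.continuous).continuousOn)
      set m : ℝ := ‖Qc.eval w₀‖ with hm_def
      have hm0 : 0 < m := norm_pos_iff.mpr (hsph w₀ hw₀mem)
      obtain ⟨w₁, hw₁mem, hw₁max⟩ := hcomp.exists_isMaxOn hsphne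
        ((continuous_norm.comp Rc.continuous).continuousOn)
      set C' : ℝ := ‖Rc.eval w₁‖ with hC'_def
      have htend : Filter.Tendsto (fun k : ℕ => ((M + 1) / 2) ^ k * m)
          Filter.atTop Filter.atTop :=
        (tendsto_pow_atTop_atTop_of_one_lt h1half).atTop_mul_const hm0
      obtain ⟨N2, hN2⟩ := Filter.eventually_atTop.mp
        (htend.eventually_gt_atTop (C' + ‖Rc.eval α‖))
      rw [Filter.eventually_atTop]
      refine ⟨max N2 1, fun k hk => ?_⟩
      have hk1 : 1 ≤ k := le_trans (le_max_right _ _) hk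
      have hkN2 : N2 ≤ k := le_trans (le_max_left _ _) hk
      have hroot_ball : ∃ z : ℂ, (X ^ k * Qc + Rc).IsRoot z ∧ dist z α ≤ r := by
        by_contra hno
        push_neg at hno
        have hPne : ∀ z ∈ Metric.closedBall α r, (X ^ k * Qc + Rc).eval z ≠ 0 := by
          intro z hzmem hz0
          exact absurd (Metric.mem_closedBall.mp hzmem) (not_le.mpr (hno z hz0))
        set B : ℝ := ((M + 1) / 2) ^ k * m - C' with hB
        have hBc : ‖Rc.eval α‖ < B := by
          have := hN2 k hkN2
          simp only [hB]; linarith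
        have hBpos : 0 < B := lt_trans hcpos hBc
        have hsphere_lb : ∀ z ∈ Metric.sphere α r,
            B ≤ ‖(X ^ k * Qc + Rc).eval z‖ := by
          intro z hzmem
          have hdz : dist z α = r := Metric.mem_sphere.mp hzmem
          have hsub : ‖α‖ - ‖z‖ ≤ ‖α - z‖ := by
            exact norm_sub_norm_le α z
          have hdistαz : ‖α - z‖ = r := by
            rw [← dist_eq_norm, dist_comm]; exact hdz
          have hzabs : M - r ≤ ‖z‖ := by
            rw [hdistαz] at hsub; linarith [hαabs]
          rw [heval]
          have hQz : m ≤ ‖Qc.eval z‖ := hw₀min hzmem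
          have hRz : ‖Rc.eval z‖ ≤ C' := hw₁max hzmem
          have htri : ‖z ^ k * Qc.eval z‖
              ≤ ‖z ^ k * Qc.eval z + Rc.eval z‖ + ‖Rc.eval z‖ := by
            have := norm_add_le (z ^ k * Qc.eval z + Rc.eval z) (-(Rc.eval z))
            simpa using this
          have hpow : ((M + 1) / 2) ^ k ≤ ‖z‖ ^ k :=
            pow_le_pow_left₀ (by linarith) (le_trans hrM hzabs) k
          have hAbs : ((M + 1) / 2) ^ k * m ≤ ‖z ^ k * Qc.eval z‖ := by
            rw [norm_mul, norm_pow]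
            exact mul_le_mul hpow hQz hm0.le (pow_nonneg (by linarith) k)
          simp only [hB]
          linarith
        have hdiff : DiffContOnCl ℂ (fun z => ((X ^ k * Qc + Rc).eval z)⁻¹)
            (Metric.ball α r) := by
          refine DifferentiableOn.diffContOnCl ?_
          rw [closure_ball α hr0.ne']
          exact DifferentiableOn.inv
            ((X ^ k * Qc + Rc).differentiable.differentiableOn) hPne
        have hfr : ∀ z ∈ frontier (Metric.ball α r),
            ‖((X ^ k * Qc + Rc).eval z)⁻¹‖ ≤ B⁻¹ := by
          intro z hzf
          rw [frontier_ball α hr0.ne'] at hzf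
          have hlb' := hsphere_lb z hzf
          rw [norm_inv]
          exact inv_anti₀ hBpos hlb'
        have hαcl : α ∈ closure (Metric.ball α r) := by
          rw [closure_ball α hr0.ne']
          exact Metric.mem_closedBall_self hr0.le
        have hmax := Complex.norm_le_of_forall_mem_frontier_norm_le
          Metric.isBounded_ball hdiff hfr hαcl
        have hPα : (X ^ k * Qc + Rc).eval α = Rc.eval α := by
          rw [heval, hQα]; ring
        rw [hPα, norm_inv] at hmax
        have hBle : B ≤ ‖Rc.eval α‖ := (inv_le_inv₀ hcpos hBpos).mp hmax
        linarith
      obtain ⟨z, hzroot, hzdist⟩ := hroot_ball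
      have hsub : ‖α‖ - ‖z‖ ≤ ‖α - z‖ := by
        exact norm_sub_norm_le α z
      have hd2 : ‖α - z‖ ≤ r := by
        rw [← dist_eq_norm, dist_comm]; exact hzdist
      have hzabs : M - ε ≤ ‖z‖ := by
        rw [← hαabs]; linarith
      exact le_trans hzabs (hhouse_ge k hk1 z hzroot)
  rw [Metric.tendsto_atTop]
  intro ε hε
  have hε2 : 0 < ε / 2 := by linarith
  obtain ⟨N1, hN1⟩ := Filter.eventually_atTop.mp (hub (ε / 2) hε2)
  obtain ⟨N2, hN2⟩ := Filter.eventually_atTop.mp (hlb (ε / 2) hε2)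
  refine ⟨max N1 N2, fun k hk => ?_⟩
  have h1 := hN1 k (le_trans (le_max_left _ _) hk)
  have h2 := hN2 k (le_trans (le_max_right _ _) hk)
  rw [Real.dist_eq]
  have habs2 : |house (salemBoyd Q k) - M| ≤ ε / 2 := abs_le.mpr ⟨by linarith, by linarith⟩
  linarith

end
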